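/- Let G be a nonnegative real random variable such that for some constant C > 0, P(G <= u) <= C*u for all u > 0. Then for every a > 0, E[exp(-a * G^2)] <= (C/2) * sqrt(pi/a). -/

import Mathlib

open MeasureTheory ProbabilityTheory Real

/-- The Gamma-function value `Γ(3/2) = √π / 2` as an explicit integral. -/
lemma aux_gamma_integral :
    ∫ x in Set.Ioi (0:ℝ), Real.exp (-x) * Real.sqrt x = Real.sqrt π / 2 := by
  have h2 : Real.Gamma (3/2) = Real.sqrt π / 2 := by
    have h3 : (3/2 : ℝ) = 1/2 + 1 := by norm_num
    rw [h3, Real.Gamma_add_one (by norm_num), Real.Gamma_one_half_eq]; ring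
  have h := Real.Gamma_eq_integral (s := 3/2) (by norm_num)
  rw [← h2, h]
  refine setIntegral_congr_fun measurableSet_Ioi fun x hx => ?_
  rw [Real.sqrt_eq_rpow]
  norm_num

lemma aux_integrableOn_gamma :
    IntegrableOn (fun x : ℝ => Real.exp (-x) * Real.sqrt x) (Set.Ioi (0:ℝ)) := by
  have h := Real.GammaIntegral_convergent (s := 3/2) (by norm_num)
  refine h.congr_fun (fun x hx => ?_) measurableSet_Ioi
  rw [show (3/2 - 1 : ℝ) = 1/2 by norm_num, Real.sqrt_eq_rpow]

lemma aux_image : (fun x : ℝ => Real.exp (-x)) '' Set.Ioi (0:ℝ) = Set.Ioo (0:ℝ) 1 := by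
  ext y
  constructor
  · rintro ⟨x, hx, rfl⟩
    exact ⟨Real.exp_pos _, by
      rw [Real.exp_lt_one_iff]; simpa using (Set.mem_Ioi.mp hx)⟩
  · rintro ⟨hy0, hy1⟩
    refine ⟨-Real.log y, ?_, ?_⟩
    · exact Set.mem_Ioi.mpr (neg_pos.mpr (Real.log_neg hy0 hy1))
    · show Real.exp (-(-Real.log y)) = y
      rw [neg_neg, Real.exp_log hy0]

lemma aux_deriv (x : ℝ) :
    HasDerivWithinAt (fun x : ℝ => Real.exp (-x)) (-Real.exp (-x)) (Set.Ioi (0:ℝ)) x := by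
  have h : HasDerivAt (fun x : ℝ => Real.exp (-x)) (Real.exp (-x) * (-1)) x :=
    (Real.hasDerivAt_exp (-x)).comp x (hasDerivAt_neg x)
  simpa using h.hasDerivWithinAt

lemma aux_injOn : Set.InjOn (fun x : ℝ => Real.exp (-x)) (Set.Ioi (0:ℝ)) := by
  intro x _ y _ h
  have := Real.exp_injective h
  linarith [neg_injective this]

/-- Change of variables: `∫_0^1 √(-log t) dt = √π / 2`. -/
lemma aux_log_integral :
    ∫ t in Set.Ioo (0:ℝ) 1, Real.sqrt (-Real.log t) = Real.sqrt π / 2 := by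
  have h := integral_image_eq_integral_abs_deriv_smul (f := fun x : ℝ => Real.exp (-x))
    (f' := fun x : ℝ => -Real.exp (-x)) measurableSet_Ioi (fun x _ => aux_deriv x)
    aux_injOn (fun t => Real.sqrt (-Real.log t))
  rw [aux_image] at h
  rw [h, ← aux_gamma_integral]
  refine setIntegral_congr_fun measurableSet_Ioi fun x hx => ?_
  rw [Real.log_exp, neg_neg, abs_neg, abs_of_pos (Real.exp_pos _), smul_eq_mul]

lemma aux_log_integrableOn :
    IntegrableOn (fun t : ℝ => Real.sqrt (-Real.log t)) (Set.Ioo (0:ℝ) 1) := by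
  have h := integrableOn_image_iff_integrableOn_abs_deriv_smul (f := fun x : ℝ => Real.exp (-x))
    (f' := fun x : ℝ => -Real.exp (-x)) measurableSet_Ioi (fun x _ => aux_deriv x)
    aux_injOn (fun t => Real.sqrt (-Real.log t))
  rw [aux_image] at h
  rw [h]
  refine aux_integrableOn_gamma.congr_fun (fun x hx => ?_) measurableSet_Ioi
  rw [Real.log_exp, neg_neg, abs_neg, abs_of_pos (Real.exp_pos _), smul_eq_mul]

/-- **Gaussian-type integral under a margin condition.**
If `G ≥ 0` satisfies the small-ball bound `P(G ≤ u) ≤ C u` for all `u > 0`, then for every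
`a > 0`, `E[exp (-a G²)] ≤ (C/2) √(π/a)`. -/
theorem margin_exp_neg_sq_bound
    {Ω : Type*} {m0 : MeasurableSpace Ω} (P : Measure Ω) [IsProbabilityMeasure P]
    (G : Ω → ℝ) (hG_meas : Measurable G) (hG_nonneg : ∀ ω, 0 ≤ G ω)
    (C : ℝ) (hC : 0 < C)
    (hmargin : ∀ u : ℝ, 0 < u → P {ω | G ω ≤ u} ≤ ENNReal.ofReal (C * u))
    (a : ℝ) (ha : 0 < a) :
    ∫ ω, Real.exp (-a * G ω ^ 2) ∂P ≤ C / 2 * Real.sqrt (π / a) := by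
  have hsa : (0:ℝ) < Real.sqrt a := Real.sqrt_pos.mpr ha
  set f : Ω → ℝ := fun ω => Real.exp (-a * G ω ^ 2) with hf_def
  have hf_meas : Measurable f := (((hG_meas.pow_const 2).const_mul (-a)).exp)
  have hf_nonneg : ∀ ω, 0 ≤ f ω := fun ω => (Real.exp_pos _).le
  have hf_le_one : ∀ ω, f ω ≤ 1 := fun ω => by
    apply Real.exp_le_one_iff.mpr
    have := sq_nonneg (G ω)
    nlinarith
  have hf_int : Integrable f P := by
    refine Integrable.mono' (integrable_const 1) hf_meas.aestronglyMeasurable ?_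
    filter_upwards with ω
    rw [Real.norm_eq_abs, abs_of_nonneg (hf_nonneg ω)]
    exact hf_le_one ω
  rw [hf_int.integral_eq_integral_meas_lt (Filter.Eventually.of_forall hf_nonneg)]
  set g : ℝ → ℝ :=
    Set.indicator (Set.Ioo 0 1) (fun t => C / Real.sqrt a * Real.sqrt (-Real.log t)) with hg_def
  have hg_int : Integrable g (volume.restrict (Set.Ioi (0:ℝ))) := by
    refine Integrable.restrict ?_
    rw [hg_def]
    exact MeasureTheory.IntegrableOn.integrable_indicator
      (aux_log_integrableOn.const_mul _) measurableSet_Ioo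
  have hbound : ∀ t ∈ Set.Ioi (0:ℝ), (P {ω | t < f ω}).toReal ≤ g t := by
    intro t ht
    rw [Set.mem_Ioi] at ht
    by_cases h1 : t < 1
    · have hlog : 0 < -Real.log t := by
        have := Real.log_neg ht h1; linarith
      set u : ℝ := Real.sqrt (-Real.log t / a) with hu_def
      have hu : 0 < u := Real.sqrt_pos.mpr (div_pos hlog ha)
      have hsub : {ω | t < f ω} ⊆ {ω | G ω ≤ u} := by
        intro ω hω
        simp only [Set.mem_setOf_eq] at hω ⊢
        have hlt : Real.log t < -a * G ω ^ 2 := by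
          calc Real.log t < Real.log (f ω) := Real.log_lt_log ht hω
          _ = -a * G ω ^ 2 := Real.log_exp _
        have hsq : G ω ^ 2 ≤ -Real.log t / a := by
          rw [le_div_iff₀ ha]; nlinarith
        calc G ω = Real.sqrt (G ω ^ 2) := (Real.sqrt_sq (hG_nonneg ω)).symm
        _ ≤ u := Real.sqrt_le_sqrt hsq
      have hP : P {ω | t < f ω} ≤ ENNReal.ofReal (C * u) :=
        le_trans (measure_mono hsub) (hmargin u hu)
      have htr : (P {ω | t < f ω}).toReal ≤ C * u :=
        ENNReal.toReal_le_of_le_ofReal (by positivity) hP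
      have hgt : g t = C / Real.sqrt a * Real.sqrt (-Real.log t) := by
        rw [hg_def, Set.indicator_of_mem (Set.mem_Ioo.mpr ⟨ht, h1⟩)]
      rw [hgt]
      have : C * u = C / Real.sqrt a * Real.sqrt (-Real.log t) := by
        rw [hu_def, Real.sqrt_div hlog.le]
        field_simp
      linarith [htr, this ▸ htr]
    · have hempty : {ω | t < f ω} = ∅ := by
        ext ω
        simp only [Set.mem_setOf_eq, Set.mem_empty_iff_false, iff_false, not_lt]
        exact le_trans (hf_le_one ω) (not_lt.mp h1)
      rw [hempty, measure_empty]
      simp only [ENNReal.toReal_zero]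
      rw [hg_def, Set.indicator_of_notMem (by simp [not_lt.mp h1])]
  have hmono : ∫ t in Set.Ioi (0:ℝ), (P {ω | t < f ω}).toReal ≤ ∫ t in Set.Ioi (0:ℝ), g t := by
    refine integral_mono_of_nonneg ?_ hg_int ?_
    · filter_upwards with t; exact ENNReal.toReal_nonneg
    · exact (ae_restrict_iff' measurableSet_Ioi).mpr (Filter.Eventually.of_forall hbound)
  refine le_trans hmono ?_
  have hgval : ∫ t in Set.Ioi (0:ℝ), g t
      = C / Real.sqrt a * ∫ t in Set.Ioo (0:ℝ) 1, Real.sqrt (-Real.log t) := by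
    rw [hg_def, integral_indicator measurableSet_Ioo, Measure.restrict_restrict measurableSet_Ioo]
    rw [Set.inter_eq_left.mpr Set.Ioo_subset_Ioi_self]
    rw [integral_const_mul]
  rw [hgval, aux_log_integral]
  have : Real.sqrt (π / a) = Real.sqrt π / Real.sqrt a := Real.sqrt_div Real.pi_pos.le a
  rw [this]
  apply le_of_eq
  field_simp
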